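/- Fix v ≥ 1, let X := Fin v → Bool, n := 2^v, and let t ∈ X be the all-true valuation. Let (W, R) be a Kripke frame and let x, y : ℕ with x ≤ n - 1, y ≤ n - 1 and x ≤ y. Then the following are equivalent: (i) for every valuation assignment V : W → X and every world w : W with V w = t, either (t ∉ img(V,w) and img(V,w).ncard ≤ x) or (t ∈ img(V,w) and img(V,w).ncard ≤ y) — i.e., the non-iterative K-plane axiom α_K(x,y) is valid on the frame; (ii) every world w satisfies: (¬R w w, and sees(w) is finite with sees(w).ncard ≤ x) or (R w w, and others(w) is finite with others(w).ncard + 1 ≤ y). -/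

import Mathlib

open Set

/-- Build a valuation that maps a finite set `T` of size `k` bijectively onto the
range of an embedding `u : Fin k ↪ X`, and is constantly `t` elsewhere. -/
lemma exists_valuation {W X : Type*} (T : Set W) (hT : T.Finite) {k : ℕ}
    (hk : T.ncard = k) (u : Fin k ↪ X) (t : X) :
    ∃ V : W → X, Set.InjOn V T ∧ V '' T = Set.range u ∧ ∀ w ∉ T, V w = t := by
  classical
  haveI : Fintype T := hT.fintype
  have hcard : Fintype.card T = k := by
    rw [← Nat.card_eq_fintype_card, Nat.card_coe_set_eq, hk]
  let e : T ≃ Fin k := Fintype.equivFinOfCardEq hcard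
  refine ⟨fun w => if h : w ∈ T then u (e ⟨w, h⟩) else t, ?_, ?_, ?_⟩
  · intro a ha b hb hab
    simp only [dif_pos ha, dif_pos hb] at hab
    have := e.injective (u.injective hab)
    exact Subtype.ext_iff.mp this
  · apply Set.Subset.antisymm
    · rintro _ ⟨w, hw, rfl⟩
      simp only [dif_pos hw]
      exact ⟨e ⟨w, hw⟩, rfl⟩
    · rintro _ ⟨i, rfl⟩
      refine ⟨(e.symm i : W), (e.symm i).2, ?_⟩
      simp only [dif_pos (e.symm i).2]
      congr
      simpa using congrArg e (Subtype.ext rfl :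
        (⟨(e.symm i : W), (e.symm i).2⟩ : T) = e.symm i) |>.trans (e.apply_symm_apply i)
  · intro w hw; simp [dif_neg hw]

/-- From a set that is infinite or has more than `k` elements, extract a finite
subset of exactly `m ≤ k + 1` elements. -/
lemma exists_finite_subset_of_not_small {W : Type*} {S : Set W} {k m : ℕ}
    (h : ¬ (S.Finite ∧ S.ncard ≤ k)) (hm : m ≤ k + 1) :
    ∃ T ⊆ S, T.Finite ∧ T.ncard = m := by
  by_cases hfin : S.Finite
  · have hcard : k + 1 ≤ S.ncard := by
      by_contra hc
      exact h ⟨hfin, by omega⟩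
    obtain ⟨T, hTS, hT⟩ := Set.exists_subset_card_eq (le_trans hm hcard)
    exact ⟨T, hTS, hfin.subset hTS, hT⟩
  · have hinf : S.Infinite := hfin
    obtain ⟨T, hTS, hTfin, hT⟩ := hinf.exists_subset_ncard_eq m
    exact ⟨T, hTS, hTfin, hT⟩

/-- Frame correspondence for the K-plane axiom `α_K(x,y)`: it is valid on a
Kripke frame `(W, R)` iff every world `w` either is irreflexive and sees at
most `x` worlds, or is reflexive and sees at most `y` worlds in total
(itself plus at most `y - 1` others). Here `t = (fun _ => true)` is the
all-true valuation, `img(V,w) = V '' {w' | R w w'}`, and `x ≤ y ≤ 2^v - 1`. -/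
theorem alphaK_valid_iff_frame_condition (v : ℕ) (hv : 1 ≤ v) {W : Type*}
    (R : W → W → Prop) (x y : ℕ)
    (hx : x ≤ 2 ^ v - 1) (hy : y ≤ 2 ^ v - 1) (hxy : x ≤ y) :
    (∀ (V : W → (Fin v → Bool)) (w : W), V w = (fun _ => true) →
      ((fun _ => true : Fin v → Bool) ∉ V '' {w' | R w w'} ∧
        (V '' {w' | R w w'}).ncard ≤ x) ∨
      ((fun _ => true : Fin v → Bool) ∈ V '' {w' | R w w'} ∧
        (V '' {w' | R w w'}).ncard ≤ y)) ↔
    (∀ w : W,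
      (¬ R w w ∧ {w' | R w w'}.Finite ∧ {w' | R w w'}.ncard ≤ x) ∨
      (R w w ∧ {w' | R w w' ∧ w' ≠ w}.Finite ∧
        {w' | R w w' ∧ w' ≠ w}.ncard + 1 ≤ y)) := by
  classical
  set X := Fin v → Bool with hX
  set t : X := (fun _ => true) with ht
  have hn : 2 ≤ 2 ^ v := by
    calc 2 = 2 ^ 1 := by norm_num
    _ ≤ 2 ^ v := Nat.pow_le_pow_right (by norm_num) hv
  have hcardX : Fintype.card X = 2 ^ v := by
    simp [hX, Fintype.card_fun]
  have hcardne : Fintype.card {a : X // a ≠ t} = 2 ^ v - 1 := by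
    have : Fintype.card {a : X // ¬ a = t} =
        Fintype.card X - Fintype.card {a : X // a = t} := Fintype.card_subtype_compl _
    simpa [hcardX, Fintype.card_subtype_eq] using this
  -- embeddings avoiding `t`
  have hembne : ∀ k : ℕ, k ≤ 2 ^ v - 1 → ∃ u : Fin k ↪ X, t ∉ Set.range u := by
    intro k hk
    obtain ⟨e⟩ : Nonempty (Fin k ↪ {a : X // a ≠ t}) := by
      apply Function.Embedding.nonempty_of_card_le
      simpa [hcardne] using hk
    refine ⟨e.trans (Function.Embedding.subtype _), ?_⟩
    rintro ⟨i, hi⟩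
    exact (e i).2 (by simpa using hi)
  -- embeddings hitting `t`
  have hembt : ∀ k : ℕ, k + 1 ≤ 2 ^ v → ∃ u : Fin (k + 1) ↪ X, t ∈ Set.range u := by
    intro k hk
    obtain ⟨e⟩ : Nonempty (Fin (k + 1) ↪ X) := by
      apply Function.Embedding.nonempty_of_card_le
      simpa [hcardX] using hk
    refine ⟨e.trans (Equiv.swap (e 0) t).toEmbedding, 0, ?_⟩
    simp [Equiv.swap_apply_left]
  have hrange_card : ∀ (k : ℕ) (u : Fin k ↪ X), (Set.range u).ncard = k := by
    intro k u
    rw [← Nat.card_coe_set_eq, Nat.card_range_of_injective u.injective]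
    simp
  constructor
  · -- validity → frame condition
    intro hval w
    by_cases hR : R w w
    · -- reflexive case
      right
      refine ⟨hR, ?_⟩
      by_contra hbad
      obtain ⟨T, hTS, hTfin, hTcard⟩ : ∃ T ⊆ {w' | R w w' ∧ w' ≠ w},
          T.Finite ∧ T.ncard = y := by
        rcases Nat.eq_zero_or_pos y with hy0 | hy0
        · exact ⟨∅, Set.empty_subset _, Set.finite_empty, by simp [hy0]⟩
        · have hbad' : ¬ ({w' | R w w' ∧ w' ≠ w}.Finite ∧
              {w' | R w w' ∧ w' ≠ w}.ncard ≤ y - 1) :=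
            fun ⟨h1, h2⟩ => hbad ⟨h1, by omega⟩
          exact exists_finite_subset_of_not_small hbad' (by omega)
      obtain ⟨u, hu⟩ := hembne y hy
      obtain ⟨V, hinj, himgT, hout⟩ := exists_valuation T hTfin hTcard u t
      have hwT : w ∉ T := fun hw => (hTS hw).2 rfl
      have hVw : V w = t := hout w hwT
      have htimg : t ∈ V '' {w' | R w w'} := ⟨w, hR, hVw⟩
      have hsub : insert t (V '' T) ⊆ V '' {w' | R w w'} := by
        rintro a (rfl | ha)
        · exact htimg
        · exact Set.image_mono (f := V) (fun z hz => (hTS hz).1) ha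
      have hcount : y + 1 ≤ (V '' {w' | R w w'}).ncard := by
        have h1 : (insert t (V '' T)).ncard = y + 1 := by
          rw [Set.ncard_insert_of_notMem (by rw [himgT]; exact hu) (hTfin.image V),
            himgT, hrange_card]
        rw [← h1]
        exact Set.ncard_le_ncard hsub (Set.toFinite _)
      rcases hval V w hVw with ⟨h1, _⟩ | ⟨_, h2⟩
      · exact h1 htimg
      · omega
    · -- irreflexive case
      left
      refine ⟨hR, ?_⟩
      by_contra hbad
      have hwS : w ∉ {w' | R w w'} := hR
      by_cases hbig : ({w' | R w w'}.Finite ∧ {w' | R w w'}.ncard ≤ y)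
      · -- sees is finite, with x < ncard ≤ y: use non-`t` injective values
        obtain ⟨hSfin, hSy⟩ := hbig
        have hSx : x < {w' | R w w'}.ncard := by
          by_contra hc
          exact hbad ⟨hSfin, by omega⟩
        obtain ⟨u, hu⟩ := hembne {w' | R w w'}.ncard (le_trans hSy hy)
        obtain ⟨V, hinj, himgT, hout⟩ := exists_valuation _ hSfin rfl u t
        have hVw : V w = t := hout w hwS
        rcases hval V w hVw with ⟨_, h2⟩ | ⟨h1, _⟩
        · rw [himgT, hrange_card] at h2
          omega
        · rw [himgT] at h1
          exact hu h1
      · -- sees is infinite or has more than `y` elements: force `y + 1` values incl. `t`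
        obtain ⟨T, hTS, hTfin, hTcard⟩ :=
          exists_finite_subset_of_not_small hbig (le_refl (y + 1))
        obtain ⟨u, hu⟩ := hembt y (by omega)
        obtain ⟨V, hinj, himgT, hout⟩ := exists_valuation T hTfin hTcard u t
        have hwT : w ∉ T := fun hw => hwS (hTS hw)
        have hVw : V w = t := hout w hwT
        have hsub : V '' T ⊆ V '' {w' | R w w'} := Set.image_mono (f := V) hTS
        have htimg : t ∈ V '' {w' | R w w'} := hsub (by rw [himgT]; exact hu)
        have hcount : y + 1 ≤ (V '' {w' | R w w'}).ncard := by
          have h1 : (V '' T).ncard = y + 1 := by rw [himgT, hrange_card]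
          rw [← h1]
          exact Set.ncard_le_ncard hsub (Set.toFinite _)
        rcases hval V w hVw with ⟨h1, _⟩ | ⟨_, h2⟩
        · exact h1 htimg
        · omega
  · -- frame condition → validity
    intro hfc V w hVw
    rcases hfc w with ⟨hR, hfin, hcard⟩ | ⟨hR, hfin, hcard⟩
    · have himg : (V '' {w' | R w w'}).ncard ≤ x :=
        le_trans (Set.ncard_image_le hfin) hcard
      by_cases hmem : t ∈ V '' {w' | R w w'}
      · exact Or.inr ⟨hmem, le_trans himg hxy⟩
      · exact Or.inl ⟨hmem, himg⟩
    · have hsees : {w' | R w w'} = insert w {w' | R w w' ∧ w' ≠ w} := by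
        ext a; by_cases ha : a = w <;> simp [ha, hR]
      have hmem : t ∈ V '' {w' | R w w'} := ⟨w, hR, hVw⟩
      refine Or.inr ⟨hmem, ?_⟩
      calc (V '' {w' | R w w'}).ncard
          = (insert (V w) (V '' {w' | R w w' ∧ w' ≠ w})).ncard := by
            rw [hsees, Set.image_insert_eq]
        _ ≤ (V '' {w' | R w w' ∧ w' ≠ w}).ncard + 1 := Set.ncard_insert_le _ _
        _ ≤ {w' | R w w' ∧ w' ≠ w}.ncard + 1 :=
            Nat.add_le_add_right (Set.ncard_image_le hfin) 1
        _ ≤ y := hcard
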